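/- Suppose f is a permutation of S_d, a_0, b_0 ∈ S_d satisfy f(a_0) = b_0, and a is drawn uniformly from S_{d-1} while s ∈ {0,1} is an independent bit with P(s=0) = 1/d. Define a_t = a_0 if s = 0 and a_t = r_{a_0}(a) if s = 1, and b_t = b_0 if s = 0 and b_t = r_{b_0}(g(a)) if s = 1 (with g, r_{a_0}, r_{b_0} as in the construction). Then the pair (a_t, b_t) is uniformly distributed over the d pairs {(a', f(a')) : a' ∈ S_d}, and in particular f(a_t) = b_t holds with probability 1. -/

import Mathlib

/-- Correctly-correlated round: if `f(a₀) = b₀`, `a` is uniform on `{0,...,d-2}`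
and `s` is an independent bit with `P(s=0)=1/d`, then the outputs
`(a_t, b_t)` are uniform over the `d` pairs `{(c, f(c)) : c < d}`, and in
particular `f(a_t) = b_t` with probability `1`. -/
theorem correct_round_simulates (d : ℕ) (hd : 2 < d)
    (f : ℕ → ℕ) (hf : Set.BijOn f (Set.Iio d) (Set.Iio d))
    (a0 b0 : ℕ) (ha0 : a0 < d) (hb0 : b0 < d) (hcorr : f a0 = b0)
    (r : ℕ → ℕ → ℕ) (hr : ∀ c a, r c a = if a = c then d - 1 else a)
    (rinv : ℕ → ℕ → ℕ) (hrinv : ∀ c b, rinv c b = if b = d - 1 then c else b)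
    (g : ℕ → ℕ)
    (hg : ∀ a, g a = if f a = b0 ∧ a ≠ a0 then rinv b0 (f a0)
                     else rinv b0 (f (r a0 a)))
    (a_t b_t : Bool → ℕ → ℕ)
    (hat : ∀ s a, a_t s a = if s then r a0 a else a0)
    (hbt : ∀ s a, b_t s a = if s then r b0 (g a) else b0)
    (w : Bool → ℝ) (hw0 : w false = 1 / (d : ℝ)) (hw1 : w true = 1 - 1 / (d : ℝ)) :
    (∀ c < d, (∑ a ∈ Finset.range (d - 1), (1 / ((d : ℝ) - 1)) *
        (w false * (if a_t false a = c ∧ b_t false a = f c then 1 else 0) +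
         w true * (if a_t true a = c ∧ b_t true a = f c then 1 else 0))) = 1 / (d : ℝ)) ∧
    (∑ a ∈ Finset.range (d - 1), (1 / ((d : ℝ) - 1)) *
        (w false * (if f (a_t false a) = b_t false a then 1 else 0) +
         w true * (if f (a_t true a) = b_t true a then 1 else 0))) = 1 := by
  have hdR : (2:ℝ) < (d:ℝ) := by exact_mod_cast hd
  have hdne : (d:ℝ) ≠ 0 := by linarith
  have hd1ne : (d:ℝ) - 1 ≠ 0 := by linarith
  have hcast : ((d - 1 : ℕ) : ℝ) = (d:ℝ) - 1 := by
    have h1 : 1 ≤ d := by omega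
    push_cast [Nat.cast_sub h1]
    ring
  have hmem : ∀ x, x < d → f x < d := fun x hx => hf.mapsTo hx
  have hinj : ∀ x, x < d → ∀ y, y < d → f x = f y → x = y :=
    fun x hx y hy h => hf.injOn hx hy h
  have hrlt : ∀ a, a < d → r a0 a < d := by
    intro a ha; rw [hr]; split <;> omega
  -- key correctness fact
  have key : ∀ a, a < d - 1 → r b0 (g a) = f (r a0 a) := by
    intro a ha
    have had : a < d := by omega
    have hnot : ¬ (f a = b0 ∧ a ≠ a0) := by
      rintro ⟨h1, h2⟩
      exact h2 (hinj a had a0 ha0 (h1.trans hcorr.symm))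
    rw [hg, if_neg hnot, hrinv, hr]
    by_cases h : f (r a0 a) = d - 1
    · rw [if_pos h, if_pos rfl]
      omega
    · rw [if_neg h]
      have hyb : f (r a0 a) ≠ b0 := by
        intro hyb
        have : r a0 a = a0 :=
          hinj _ (hrlt a had) a0 ha0 (hyb.trans hcorr.symm)
        rw [hr] at this
        split at this <;> omega
      rw [if_neg hyb]
  have hra_ne : ∀ a, a < d - 1 → r a0 a ≠ a0 := by
    intro a ha; rw [hr]; split <;> omega
  constructor
  · intro c hc
    have hterm : ∀ a ∈ Finset.range (d - 1),
        (1 / ((d : ℝ) - 1)) *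
        (w false * (if a_t false a = c ∧ b_t false a = f c then 1 else 0) +
         w true * (if a_t true a = c ∧ b_t true a = f c then 1 else 0))
        = (1 / ((d : ℝ) - 1)) *
        (w false * (if c = a0 then 1 else 0) +
         w true * (if r a0 a = c then 1 else 0)) := by
      intro a ha
      rw [Finset.mem_range] at ha
      rw [hat false a, hat true a, hbt false a, hbt true a]
      simp only [Bool.false_eq_true, if_false, if_true]
      have e1 : (if a0 = c ∧ b0 = f c then (1:ℝ) else 0) = if c = a0 then 1 else 0 := by
        by_cases h : c = a0
        · subst h; rw [if_pos ⟨rfl, hcorr.symm⟩, if_pos rfl]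
        · rw [if_neg (fun hh => h hh.1.symm), if_neg h]
      have e2 : (if r a0 a = c ∧ r b0 (g a) = f c then (1:ℝ) else 0)
          = if r a0 a = c then 1 else 0 := by
        by_cases h : r a0 a = c
        · rw [if_pos ⟨h, by rw [key a ha, h]⟩, if_pos h]
        · rw [if_neg (fun hh => h hh.1), if_neg h]
      rw [e1, e2]
    rw [Finset.sum_congr rfl hterm]
    by_cases hca : c = a0
    · have hall : ∀ a ∈ Finset.range (d - 1),
          (1 / ((d : ℝ) - 1)) *
          (w false * (if c = a0 then 1 else 0) +
           w true * (if r a0 a = c then 1 else 0))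
          = (1 / ((d : ℝ) - 1)) * w false := by
        intro a ha
        rw [Finset.mem_range] at ha
        rw [if_pos hca, if_neg (by rw [hca]; exact hra_ne a ha)]
        ring
      rw [Finset.sum_congr rfl hall, Finset.sum_const, Finset.card_range,
        nsmul_eq_mul, hcast, hw0]
      field_simp
    · have hzero : ∀ a ∈ Finset.range (d - 1), r a0 a ≠ c →
          (1 / ((d : ℝ) - 1)) *
          (w false * (if c = a0 then 1 else 0) +
           w true * (if r a0 a = c then 1 else 0)) = 0 := by
        intro a _ hne
        rw [if_neg hca, if_neg hne]; ring
      by_cases hc1 : c = d - 1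
      · have ha0r : a0 ∈ Finset.range (d - 1) := by
          rw [Finset.mem_range]; omega
        rw [Finset.sum_eq_single_of_mem a0 ha0r (by
          intro a ha hne
          refine hzero a ha ?_
          rw [hr, if_neg hne]
          rw [Finset.mem_range] at ha; omega)]
        rw [if_neg hca, if_pos (by rw [hr, if_pos rfl]; omega), hw1]
        field_simp
        ring
      · have hcr : c ∈ Finset.range (d - 1) := by
          rw [Finset.mem_range]; omega
        rw [Finset.sum_eq_single_of_mem c hcr (by
          intro a ha hne
          refine hzero a ha ?_
          rw [hr]
          split <;> omega)]
        rw [if_neg hca, if_pos (by rw [hr, if_neg hca]), hw1]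
        field_simp
        ring
  · have h2 : ∀ a ∈ Finset.range (d - 1),
        (1 / ((d : ℝ) - 1)) *
        (w false * (if f (a_t false a) = b_t false a then 1 else 0) +
         w true * (if f (a_t true a) = b_t true a then 1 else 0))
        = 1 / ((d : ℝ) - 1) := by
      intro a ha
      rw [Finset.mem_range] at ha
      rw [hat false a, hat true a, hbt false a, hbt true a]
      simp only [Bool.false_eq_true, if_false, if_true]
      rw [if_pos hcorr, if_pos (key a ha).symm, hw0, hw1]
      ring
    rw [Finset.sum_congr rfl h2, Finset.sum_const, Finset.card_range,
      nsmul_eq_mul, hcast]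
    field_simp
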